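/- Let p ∈ Δ^{n−1} be a point with all coordinates strictly positive. Then the map 𝕋ⁿ → S^{2n−1} sending θ to the point (θ₁·√p₁, …, θₙ·√pₙ) is a homeomorphism of the torus 𝕋ⁿ onto the fiber π⁻¹({p}); in particular the torus acts freely and transitively on this fiber. -/

import Mathlib

open scoped BigOperators

noncomputable section

/-- The unit sphere `S^{2n-1} = {z ∈ ℂⁿ : ∑ᵢ |zᵢ|² = 1}` in `ℂⁿ`. -/
def sphereC (n : ℕ) : Set (EuclideanSpace ℂ (Fin n)) :=
  {z | ∑ i, ‖z i‖ ^ 2 = 1}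

/-- The fiber `π⁻¹({p})` of `π(z) = (|z₁|²,…,|zₙ|²)` over a point `p` of the simplex,
viewed inside the sphere. -/
def piFiber (n : ℕ) (p : Fin n → ℝ) : Set (EuclideanSpace ℂ (Fin n)) :=
  {z | z ∈ sphereC n ∧ ∀ i, ‖z i‖ ^ 2 = p i}

/-- For a point `p` of the standard simplex with all coordinates strictly positive, the map
`θ ↦ (θ₁·√p₁, …, θₙ·√pₙ)` is a homeomorphism of the torus `𝕋ⁿ = (Fin n → Circle)` onto the
fiber `π⁻¹({p})`; in particular the torus acts freely and transitively on this fiber. -/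
theorem torus_homeo_fiber (n : ℕ) (hn : 1 ≤ n) (p : Fin n → ℝ)
    (hp : p ∈ stdSimplex ℝ (Fin n)) (hpos : ∀ i, 0 < p i) :
    (∃ e : (Fin n → Circle) ≃ₜ piFiber n p,
        ∀ (θ : Fin n → Circle) (i : Fin n),
          ((e θ : EuclideanSpace ℂ (Fin n)) i) = (θ i : ℂ) * (Real.sqrt (p i) : ℂ)) ∧
    (∀ z ∈ piFiber n p, ∀ w ∈ piFiber n p,
        ∃! θ : Fin n → Circle, ∀ i, (θ i : ℂ) * z i = w i) := by
  have hsqrt : ∀ i, Real.sqrt (p i) ≠ 0 := fun i =>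
    Real.sqrt_ne_zero'.2 (hpos i)
  have habs : ∀ i (θi : Circle), ‖(θi : ℂ) * (Real.sqrt (p i) : ℂ)‖ ^ 2 = p i := by
    intro i θi
    rw [norm_mul, Circle.norm_coe, one_mul, Complex.norm_real, Real.norm_eq_abs,
      abs_of_nonneg (Real.sqrt_nonneg _), Real.sq_sqrt (hpos i).le]
  -- the forward map
  set f : (Fin n → Circle) → piFiber n p := fun θ =>
    ⟨WithLp.toLp 2 (fun i => (θ i : ℂ) * (Real.sqrt (p i) : ℂ) : Fin n → ℂ), by
      constructor
      · show ∑ i, _ = 1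
        simp only [PiLp.toLp_apply, habs]
        exact hp.2
      · intro i; exact habs i (θ i)⟩ with hf
  have hinj : Function.Injective f := by
    intro θ θ' h
    funext i
    apply Circle.ext
    have := congrArg (fun z : piFiber n p => (z : EuclideanSpace ℂ (Fin n)) i) h
    change (θ i : ℂ) * (Real.sqrt (p i) : ℂ) = (θ' i : ℂ) * (Real.sqrt (p i) : ℂ) at this
    exact mul_right_cancel₀ (Complex.ofReal_ne_zero.mpr (hsqrt i)) this
  have hsurj : Function.Surjective f := by
    rintro ⟨z, hz1, hz2⟩
    have hnorm : ∀ i, ‖z i / (Real.sqrt (p i) : ℂ)‖ = 1 := by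
      intro i
      rw [norm_div]
      have : ‖z i‖ = Real.sqrt (p i) := by
        rw [← Real.sqrt_sq (norm_nonneg _), hz2 i]
      rw [this]
      simp [Complex.norm_real, abs_of_nonneg (Real.sqrt_nonneg _),
        div_self (hsqrt i)]
    refine ⟨fun i => ⟨z i / (Real.sqrt (p i) : ℂ), mem_sphere_zero_iff_norm.2 (hnorm i)⟩, ?_⟩
    apply Subtype.ext
    ext i
    show z i / (Real.sqrt (p i) : ℂ) * (Real.sqrt (p i) : ℂ) = z i
    exact div_mul_cancel₀ _ (Complex.ofReal_ne_zero.mpr (hsqrt i))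
  have hcont : Continuous f := by
    apply Continuous.subtype_mk
    exact (PiLp.continuous_toLp 2 (fun _ : Fin n => ℂ)).comp
      (continuous_pi fun i =>
        ((continuous_subtype_val.comp (continuous_apply i)).mul continuous_const))
  have hbij : Function.Bijective f := ⟨hinj, hsurj⟩
  constructor
  · exact ⟨Continuous.homeoOfEquivCompactToT2 (f := Equiv.ofBijective f hbij) hcont,
      fun θ i => rfl⟩
  · intro z hz w hw
    have hzne : ∀ i, z i ≠ 0 := by
      intro i h
      have := hz.2 i
      rw [h] at this
      simp at this
      linarith [hpos i]
    have hwn : ∀ i, ‖w i / z i‖ = 1 := by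
      intro i
      rw [norm_div]
      have h1 : ‖w i‖ = Real.sqrt (p i) := by
        rw [← Real.sqrt_sq (norm_nonneg _), hw.2 i]
      have h2 : ‖z i‖ = Real.sqrt (p i) := by
        rw [← Real.sqrt_sq (norm_nonneg _), hz.2 i]
      rw [h1, h2, div_self (hsqrt i)]
    refine ⟨fun i => ⟨w i / z i, mem_sphere_zero_iff_norm.2 (hwn i)⟩, ?_, ?_⟩
    · intro i
      exact div_mul_cancel₀ _ (hzne i)
    · intro θ hθ
      funext i
      apply Circle.ext
      show (θ i : ℂ) = w i / z i
      rw [eq_div_iff (hzne i)]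
      exact hθ i
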